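/- Let X be a Hahn–Banach smooth Banach space (every norm-one functional in X* has a unique norm-preserving extension to X**; equivalently every point of S(X*) is a w*-w point of continuity of the dual unit ball). If X is separable, then X* is separable. -/

import Mathlib

open NormedSpace

/-- The identity from the weak* topology to the weak topology on a dual space. -/
noncomputable def toWk {X : Type*} [NormedAddCommGroup X] [NormedSpace ℝ X] :
    WeakDual ℝ X → WeakSpace ℝ (StrongDual ℝ X) :=
  fun ψ => StrongDual.toWeakDual.symm ψ

/-- The dual ball with the weak-star topology is separable when `X` is separable:
there is a countable subset of the (weak-star) dual ball which is weak-star dense in it. -/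
theorem aux_ball_sep {X : Type*} [NormedAddCommGroup X] [NormedSpace ℝ X]
    [TopologicalSpace.SeparableSpace X] :
    ∃ D : Set (WeakDual ℝ X), D.Countable ∧
      D ⊆ StrongDual.toWeakDual '' Metric.closedBall 0 1 ∧
      StrongDual.toWeakDual '' Metric.closedBall 0 1 ⊆ closure D := by
  haveI : Nonempty X := ⟨0⟩
  set K : Set (WeakDual ℝ X) := StrongDual.toWeakDual '' Metric.closedBall 0 1 with hKdef
  have hKeq : K = WeakDual.toStrongDual ⁻¹' Metric.closedBall 0 1 := by
    ext ψ
    constructor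
    · rintro ⟨φ, hφ, rfl⟩; exact hφ
    · intro h; exact ⟨WeakDual.toStrongDual ψ, h, rfl⟩
  have hK : IsCompact K := by
    rw [hKeq]; exact WeakDual.isCompact_closedBall (𝕜 := ℝ) 0 1
  -- the evaluation map on a dense sequence
  set u : ℕ → X := TopologicalSpace.denseSeq X with hu
  set g : WeakDual ℝ X → (ℕ → ℝ) := fun ψ n => ψ (u n) with hg
  have hg_cont : Continuous g := continuous_pi fun n => WeakDual.eval_continuous (u n)
  have hg_inj : Function.Injective g := by
    intro ψ₁ ψ₂ h
    have hc₁ : Continuous (ψ₁ : X → ℝ) := ψ₁.cont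
    have hc₂ : Continuous (ψ₂ : X → ℝ) := ψ₂.cont
    have : (ψ₁ : X → ℝ) = ψ₂ := by
      apply Continuous.ext_on (TopologicalSpace.denseRange_denseSeq X) hc₁ hc₂
      rintro x ⟨n, rfl⟩
      exact congrFun h n
    exact DFunLike.coe_injective this
  haveI : CompactSpace K := isCompact_iff_compactSpace.mp hK
  have hi : Continuous (fun x : K => g x) := hg_cont.comp continuous_subtype_val
  have hi_inj : Function.Injective (fun x : K => g x) := fun a b h =>
    Subtype.ext (hg_inj h)
  have hemb := (hi.isClosedEmbedding hi_inj).isEmbedding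
  haveI : SecondCountableTopology K := hemb.secondCountableTopology
  haveI : TopologicalSpace.SeparableSpace K :=
    TopologicalSpace.SecondCountableTopology.to_separableSpace
  obtain ⟨s, hs_count, hs_dense⟩ := TopologicalSpace.exists_countable_dense K
  refine ⟨Subtype.val '' s, hs_count.image _, ?_, ?_⟩
  · rintro x ⟨y, _, rfl⟩; exact y.2
  · intro x hx
    have : (⟨x, hx⟩ : K) ∈ closure s := hs_dense _
    exact map_mem_closure continuous_subtype_val this fun y hy => Set.mem_image_of_mem _ hy

/-- Let `X` be a Hahn–Banach smooth Banach space, i.e. every norm-one functional in `X*` is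
a `w*`-`w` point of continuity of the dual unit ball.  If `X` is separable, then `X*` is
separable. -/
theorem stmt19 {X : Type*} [NormedAddCommGroup X] [NormedSpace ℝ X] [CompleteSpace X]
    [TopologicalSpace.SeparableSpace X]
    (hHB : ∀ φ : StrongDual ℝ X, ‖φ‖ = 1 →
      ContinuousWithinAt toWk
        (StrongDual.toWeakDual '' Metric.closedBall 0 1)
        (StrongDual.toWeakDual φ)) :
    TopologicalSpace.SeparableSpace (StrongDual ℝ X) := by
  classical
  obtain ⟨D, hD_count, hD_sub, hD_dense⟩ := aux_ball_sep (X := X)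
  set V := StrongDual ℝ X
  -- pull `D` back to the dual
  set E₀ : Set V := StrongDual.toWeakDual ⁻¹' D with hE₀
  have hE₀_count : E₀.Countable :=
    hD_count.preimage (StrongDual.toWeakDual.injective)
  -- the closed span of `E₀`
  set C : Set V := (Submodule.span ℝ E₀ : Set V) with hC
  have hC_conv : Convex ℝ C := (Submodule.span ℝ E₀).convex
  have hC_sep : TopologicalSpace.IsSeparable C := hE₀_count.isSeparable.span
  -- the sphere is contained in the norm closure of `C`
  have hsphere : Metric.sphere (0 : V) 1 ⊆ closure C := by
    intro φ hφ
    have hφ1 : ‖φ‖ = 1 := by simpa using hφ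
    have hmem : StrongDual.toWeakDual φ ∈
        StrongDual.toWeakDual '' Metric.closedBall 0 1 :=
      ⟨φ, by simp [hφ1], rfl⟩
    have h1 : StrongDual.toWeakDual φ ∈ closure D := hD_dense hmem
    have hc : ContinuousWithinAt toWk D (StrongDual.toWeakDual φ) :=
      (hHB φ hφ1).mono hD_sub
    have h2 : toWk (StrongDual.toWeakDual φ) ∈ closure (toWk '' D) :=
      hc.mem_closure_image h1
    -- identify `toWk '' D` with `toWeakSpace ℝ V '' E₀`
    have himg : toWk '' D = toWeakSpace ℝ V '' E₀ := by
      ext y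
      constructor
      · rintro ⟨ψ, hψ, rfl⟩
        refine ⟨StrongDual.toWeakDual.symm ψ, ?_, rfl⟩
        simpa [hE₀] using hψ
      · rintro ⟨x, hx, rfl⟩
        exact ⟨StrongDual.toWeakDual x, hx, rfl⟩
    rw [himg] at h2
    have h3 : toWk (StrongDual.toWeakDual φ) ∈ closure (toWeakSpace ℝ V '' C) :=
      closure_mono (Set.image_mono Submodule.subset_span) h2
    rw [← hC_conv.toWeakSpace_closure ℝ] at h3
    obtain ⟨y, hy, hy2⟩ := h3
    have : y = φ := (toWeakSpace ℝ V).injective hy2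
    rwa [← this]
  have hsphere_sep : TopologicalSpace.IsSeparable (Metric.sphere (0 : V) 1) :=
    (hC_sep.closure).mono hsphere
  -- every element of `V` is a scalar multiple of a sphere element (or zero)
  have hcover : (Set.univ : Set V) ⊆
      (fun p : ℝ × V => p.1 • p.2) ''
        (Set.univ ×ˢ (insert (0 : V) (Metric.sphere (0 : V) 1))) := by
    intro φ _
    rcases eq_or_ne φ 0 with rfl | hφ
    · exact ⟨(0, 0), ⟨Set.mem_univ _, Set.mem_insert _ _⟩, by simp⟩
    · refine ⟨(‖φ‖, ‖φ‖⁻¹ • φ), ⟨Set.mem_univ _, Set.mem_insert_of_mem _ ?_⟩, ?_⟩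
      · simp [norm_smul, inv_mul_cancel₀ (norm_ne_zero_iff.mpr hφ)]
      · simp [smul_smul, mul_inv_cancel₀ (norm_ne_zero_iff.mpr hφ)]
  have hprod : TopologicalSpace.IsSeparable
      ((Set.univ : Set ℝ) ×ˢ (insert (0 : V) (Metric.sphere (0 : V) 1))) :=
    (TopologicalSpace.IsSeparable.of_separableSpace _).prod
      (((Set.countable_singleton (0 : V)).isSeparable.union hsphere_sep).mono
        (by rw [Set.insert_eq]))
  have himage : TopologicalSpace.IsSeparable
      ((fun p : ℝ × V => p.1 • p.2) ''
        (Set.univ ×ˢ (insert (0 : V) (Metric.sphere (0 : V) 1)))) :=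
    hprod.image (continuous_fst.smul continuous_snd)
  exact TopologicalSpace.isSeparable_univ_iff.mp (himage.mono hcover)
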